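/- Let G₁, …, G_m be connected simple graphs on the same vertex set {1,…,d}, and let G = G₁ + ⋯ + G_m be the graph on {1,…,d} with edge set ⋃ E(G_i). Then dim(P_{G₁} + ⋯ + P_{G_m}) = d − 2 if G is bipartite, and d − 1 if G is not bipartite. -/

import Mathlib

open Pointwise

/-- `ρ({i,j}) = e_i + e_j`: the 0/1 indicator vector of an edge. -/
def edgeVec {d : ℕ} (e : Sym2 (Fin d)) : Fin d → ℝ :=
  fun t => if t ∈ e then 1 else 0

/-- The edge polytope of a graph `G` on `{1, …, d}`. -/
def edgePolytope {d : ℕ} (G : SimpleGraph (Fin d)) : Set (Fin d → ℝ) :=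
  convexHull ℝ (edgeVec '' G.edgeSet)

namespace EPAux

variable {d : ℕ}

/-- sum of coordinates over a color class, as a linear map -/
noncomputable def colSum (C : Fin d → Bool) (b : Bool) : (Fin d → ℝ) →ₗ[ℝ] ℝ where
  toFun x := ∑ t, if C t = b then x t else 0
  map_add' x y := by
    simp only [Pi.add_apply]
    rw [← Finset.sum_add_distrib]
    exact Finset.sum_congr rfl fun t _ => by split <;> simp
  map_smul' c x := by
    simp only [Pi.smul_apply, smul_eq_mul, RingHom.id_apply, Finset.mul_sum]
    exact Finset.sum_congr rfl fun t _ => by split <;> simp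

lemma colSum_apply (C : Fin d → Bool) (b : Bool) (x : Fin d → ℝ) :
    colSum C b x = ∑ t, if C t = b then x t else 0 := rfl

lemma colSum_single (C : Fin d → Bool) (b : Bool) (a : Fin d) :
    colSum C b (Pi.single a (1:ℝ)) = if C a = b then 1 else 0 := by
  rw [colSum_apply]
  rw [Finset.sum_eq_single a]
  · simp
  · intro t _ ht
    simp [Pi.single_apply, ht]
  · simp

/-- the two-class sum map -/
noncomputable def phi (C : Fin d → Bool) : (Fin d → ℝ) →ₗ[ℝ] ℝ × ℝ :=
  (colSum C true).prod (colSum C false)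

lemma phi_surjective {C : Fin d → Bool} {a₀ b₀ : Fin d}
    (ha : C a₀ = true) (hb : C b₀ = false) : Function.Surjective (phi C) := by
  intro p
  refine ⟨p.1 • (Pi.single a₀ 1 : Fin d → ℝ) + p.2 • (Pi.single b₀ 1 : Fin d → ℝ), ?_⟩
  simp only [phi, map_add, map_smul, LinearMap.prod_apply, Function.prod, colSum_single, ha, hb]
  simp [colSum_single, ha, hb]

lemma finrank_ker_phi {C : Fin d → Bool} {a₀ b₀ : Fin d}
    (ha : C a₀ = true) (hb : C b₀ = false) :
    Module.finrank ℝ (LinearMap.ker (phi C)) = d - 2 := by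
  have h := LinearMap.finrank_range_add_finrank_ker (phi C)
  rw [LinearMap.range_eq_top.mpr (phi_surjective ha hb), finrank_top] at h
  have h2 : Module.finrank ℝ (ℝ × ℝ) = 2 := by
    simp [Module.finrank_prod]
  have hd : Module.finrank ℝ (Fin d → ℝ) = d := by simp
  omega

/-- total coordinate sum -/
noncomputable def tot : (Fin d → ℝ) →ₗ[ℝ] ℝ where
  toFun x := ∑ t, x t
  map_add' x y := by simp [Finset.sum_add_distrib]
  map_smul' c x := by simp [Finset.mul_sum]

lemma tot_apply (x : Fin d → ℝ) : (tot x : ℝ) = ∑ t, x t := rfl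

lemma tot_single (a : Fin d) : tot (Pi.single a (1:ℝ)) = 1 := by
  rw [tot_apply, Finset.sum_eq_single a]
  · simp
  · intro t _ ht; simp [Pi.single_apply, ht]
  · simp

lemma finrank_ker_tot (hd : 0 < d) :
    Module.finrank ℝ (LinearMap.ker (tot (d := d))) = d - 1 := by
  have h := LinearMap.finrank_range_add_finrank_ker (tot (d := d))
  have hsurj : Function.Surjective (tot (d := d)) := by
    intro c
    refine ⟨c • (Pi.single ⟨0, hd⟩ 1 : Fin d → ℝ), ?_⟩
    rw [map_smul, tot_single]
    simp
  rw [LinearMap.range_eq_top.mpr hsurj, finrank_top] at h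
  have hd' : Module.finrank ℝ (Fin d → ℝ) = d := by simp
  have h1 : Module.finrank ℝ ℝ = 1 := Module.finrank_self ℝ
  omega

end EPAux

namespace Chunk2
variable {d : ℕ}

lemma edgeVec_pair {a b : Fin d} (hab : a ≠ b) :
    edgeVec s(a,b) = (Pi.single a 1 : Fin d → ℝ) + Pi.single b 1 := by
  funext t
  simp only [edgeVec, Pi.add_apply, Pi.single_apply, Sym2.mem_iff]
  by_cases h1 : t = a <;> by_cases h2 : t = b <;> simp_all

open EPAux

lemma tot_edgeVec {Γ : SimpleGraph (Fin d)} {e : Sym2 (Fin d)} (he : e ∈ Γ.edgeSet) :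
    tot (edgeVec e) = 2 := by
  induction e using Sym2.ind with
  | _ x y =>
    rw [SimpleGraph.mem_edgeSet] at he
    rw [edgeVec_pair he.ne, map_add, tot_single, tot_single]
    norm_num

lemma colSum_edgeVec {Γ : SimpleGraph (Fin d)} {C : Fin d → Bool}
    (hC : ∀ a b, Γ.Adj a b → C a ≠ C b) {e : Sym2 (Fin d)} (he : e ∈ Γ.edgeSet) (b : Bool) :
    colSum C b (edgeVec e) = 1 := by
  induction e using Sym2.ind with
  | _ x y =>
    rw [SimpleGraph.mem_edgeSet] at he
    have hxy := hC _ _ he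
    rw [edgeVec_pair he.ne, map_add, colSum_single, colSum_single]
    cases hx : C x <;> cases hy : C y <;> cases b <;> simp_all

lemma even_walk {Γ : SimpleGraph (Fin d)} :
    ∀ {u v : Fin d} (p : Γ.Walk u v), Even p.length →
      (Pi.single u 1 : Fin d → ℝ) - Pi.single v 1 ∈ vectorSpan ℝ (edgeVec '' Γ.edgeSet)
  | u, _, SimpleGraph.Walk.nil, _ => by simp
  | u, v, SimpleGraph.Walk.cons h SimpleGraph.Walk.nil, hev => by
      simp [SimpleGraph.Walk.length] at hev
  | u, v, SimpleGraph.Walk.cons (v := x) h (SimpleGraph.Walk.cons (v := y) h' p), hev => by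
      simp only [SimpleGraph.Walk.length_cons] at hev
      rw [Nat.even_add_one, Nat.even_add_one, not_not] at hev
      have ih := even_walk p hev
      have key : (Pi.single u 1 : Fin d → ℝ) - Pi.single y 1
          = edgeVec s(u,x) - edgeVec s(x,y) := by
        rw [edgeVec_pair h.ne, edgeVec_pair h'.ne]
        abel
      have h1 : edgeVec s(u,x) - edgeVec s(x,y) ∈ vectorSpan ℝ (edgeVec '' Γ.edgeSet) := by
        have := vsub_mem_vectorSpan ℝ
          (Set.mem_image_of_mem edgeVec ((SimpleGraph.mem_edgeSet Γ).mpr h))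
          (Set.mem_image_of_mem edgeVec ((SimpleGraph.mem_edgeSet Γ).mpr h'))
        simpa using this
      have := Submodule.add_mem _ (key ▸ h1) ih
      simpa [sub_add_sub_cancel] using this

lemma walk_parity {Γ : SimpleGraph (Fin d)} {C : Fin d → Bool}
    (hC : ∀ a b, Γ.Adj a b → C a ≠ C b) :
    ∀ {u v : Fin d} (p : Γ.Walk u v), Even p.length ↔ C u = C v
  | u, _, SimpleGraph.Walk.nil => by simp
  | u, v, SimpleGraph.Walk.cons (v := x) h p => by
      have ih := walk_parity hC p
      have hx := hC _ _ h
      rw [SimpleGraph.Walk.length_cons, Nat.even_add_one, ih]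
      cases hu : C u <;> cases hxx : C x <;> cases hv : C v <;> simp_all

lemma exists_even_walk {Γ : SimpleGraph (Fin d)} (hc : Γ.Connected)
    (hnb : ¬ Γ.Colorable 2) (u v : Fin d) : ∃ p : Γ.Walk u v, Even p.length := by
  classical
  have hW : ∀ w, Γ.Walk u w := fun w => (hc.preconnected u w).some
  by_cases hprop : ∀ a b, Γ.Adj a b → ((Even (hW a).length) ↔ (Even (hW b).length)) → False
  · exfalso
    apply hnb
    refine ⟨SimpleGraph.Coloring.mk (fun w => if Even (hW w).length then 0 else 1) ?_⟩
    intro a b hab hco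
    refine hprop a b hab ?_
    by_cases h1 : Even (hW a).length <;> by_cases h2 : Even (hW b).length
    · exact iff_of_true h1 h2
    · exfalso; simp [h1, h2] at hco
    · exfalso; simp [h1, h2] at hco
    · exact iff_of_false h1 h2
  · push_neg at hprop
    obtain ⟨a, b, hab, hpar⟩ := hprop
    set q : Γ.Walk u u :=
      (hW a).append ((SimpleGraph.Walk.cons hab SimpleGraph.Walk.nil).append (hW b).reverse)
      with hq
    have hqlen : Odd q.length := by
      have hlen : q.length = (hW a).length + (hW b).length + 1 := by
        simp only [hq, SimpleGraph.Walk.length_append, SimpleGraph.Walk.length_cons,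
          SimpleGraph.Walk.length_nil, SimpleGraph.Walk.length_reverse]
        omega
      rw [hlen]
      exact (Nat.even_add.mpr hpar.1).add_one
    by_cases hp0 : Even (hW v).length
    · exact ⟨hW v, hp0⟩
    · refine ⟨q.append (hW v), ?_⟩
      rw [SimpleGraph.Walk.length_append]
      exact hqlen.add_odd (Nat.not_even_iff_odd.mp hp0)

end Chunk2

namespace Chunk3
open EPAux
variable {d : ℕ}

lemma mem_of_sum_zero {T : Submodule ℝ (Fin d → ℝ)}
    (hT : ∀ u v : Fin d, (Pi.single u 1 : Fin d → ℝ) - Pi.single v 1 ∈ T)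
    (v₀ : Fin d) {x : Fin d → ℝ} (hx : ∑ t, x t = 0) : x ∈ T := by
  have hxe : x = ∑ t, x t • ((Pi.single t 1 : Fin d → ℝ) - Pi.single v₀ 1) := by
    funext s
    rw [Finset.sum_apply]
    simp only [Pi.smul_apply, Pi.sub_apply, Pi.single_apply, smul_eq_mul, mul_sub]
    rw [Finset.sum_sub_distrib]
    have h1 : ∑ t, x t * (if s = t then (1:ℝ) else 0) = x s := by
      rw [Finset.sum_eq_single s]
      · simp
      · intro t _ ht; simp [Ne.symm ht]
      · simp
    have h2 : ∑ t, x t * (if s = v₀ then (1:ℝ) else 0)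
        = (∑ t, x t) * (if s = v₀ then 1 else 0) := by
      rw [Finset.sum_mul]
    rw [h1, h2, hx]
    ring
  rw [hxe]
  exact Submodule.sum_mem _ fun t _ => Submodule.smul_mem _ _ (hT t v₀)

lemma mem_of_colsum_zero {T : Submodule ℝ (Fin d → ℝ)} {C : Fin d → Bool}
    (hT : ∀ u v : Fin d, C u = C v → (Pi.single u 1 : Fin d → ℝ) - Pi.single v 1 ∈ T)
    {a₀ b₀ : Fin d} (ha : C a₀ = true) (hb : C b₀ = false)
    {x : Fin d → ℝ} (h1 : colSum C true x = 0) (h0 : colSum C false x = 0) : x ∈ T := by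
  classical
  set r : Bool → Fin d := fun b => if b then a₀ else b₀ with hr
  have hCr : ∀ t, C (r (C t)) = C t := by
    intro t; cases ht : C t <;> simp [hr, ha, hb]
  have hxe : x = ∑ t, x t • ((Pi.single t 1 : Fin d → ℝ) - Pi.single (r (C t)) 1) := by
    funext s
    rw [Finset.sum_apply]
    simp only [Pi.smul_apply, Pi.sub_apply, Pi.single_apply, smul_eq_mul, mul_sub]
    rw [Finset.sum_sub_distrib]
    have hA : ∑ t, x t * (if s = t then (1:ℝ) else 0) = x s := by
      rw [Finset.sum_eq_single s]
      · simp
      · intro t _ ht; simp [Ne.symm ht]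
      · simp
    have hB : ∑ t, x t * (if s = r (C t) then (1:ℝ) else 0)
        = (colSum C true x) * (if s = a₀ then 1 else 0)
          + (colSum C false x) * (if s = b₀ then 1 else 0) := by
      rw [colSum_apply, colSum_apply, Finset.sum_mul, Finset.sum_mul,
        ← Finset.sum_add_distrib]
      refine Finset.sum_congr rfl fun t _ => ?_
      cases ht : C t <;> simp [hr, ht]
    rw [hA, hB, h1, h0]
    ring
  rw [hxe]
  exact Submodule.sum_mem _ fun t _ =>
    Submodule.smul_mem _ _ (hT t (r (C t)) (hCr t).symm)

lemma vectorSpan_setSum {m : ℕ} (s : Fin m → Set (Fin d → ℝ)) (hne : ∀ i, (s i).Nonempty) :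
    vectorSpan ℝ (∑ i, s i) = ⨆ i, vectorSpan ℝ (s i) := by
  classical
  apply le_antisymm
  · rw [vectorSpan_def, Submodule.span_le]
    rintro z hz
    rw [Set.mem_vsub] at hz
    obtain ⟨a, haa, b, hbb, rfl⟩ := hz
    obtain ⟨f, hf, rfl⟩ := (Set.mem_fintype_sum s a).mp haa
    obtain ⟨g, hg, rfl⟩ := (Set.mem_fintype_sum s b).mp hbb
    have : (∑ i, f i) -ᵥ (∑ i, g i) = ∑ i, (f i - g i) := by
      rw [vsub_eq_sub, Finset.sum_sub_distrib]
    rw [SetLike.mem_coe, this]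
    refine Submodule.sum_mem _ fun i _ => Submodule.mem_iSup_of_mem i ?_
    exact vsub_mem_vectorSpan ℝ (hf i) (hg i)
  · refine iSup_le fun i => ?_
    rw [vectorSpan_def, Submodule.span_le]
    rintro z hz
    rw [Set.mem_vsub] at hz
    obtain ⟨a, haa, b, hbb, rfl⟩ := hz
    choose p hp using hne
    have hfs : ∀ (c : Fin d → ℝ), c ∈ s i →
        (∑ j, Function.update p i c j) ∈ ∑ j, s j := by
      intro c hc
      refine (Set.mem_fintype_sum s _).mpr ⟨Function.update p i c, fun j => ?_, rfl⟩
      by_cases hj : j = i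
      · subst hj; simpa using hc
      · simpa [Function.update_of_ne hj] using hp j
    have hdiff : a -ᵥ b = (∑ j, Function.update p i a j) -ᵥ (∑ j, Function.update p i b j) := by
      rw [vsub_eq_sub, vsub_eq_sub,
        Finset.sum_update_of_mem (Finset.mem_univ i),
        Finset.sum_update_of_mem (Finset.mem_univ i)]
      abel
    rw [SetLike.mem_coe, hdiff]
    exact vsub_mem_vectorSpan ℝ (hfs a haa) (hfs b hbb)

lemma exists_adj {Γ : SimpleGraph (Fin d)} (hc : Γ.Connected) (hd : 2 ≤ d) :
    ∃ a b, Γ.Adj a b := by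
  obtain ⟨p⟩ := hc.preconnected ⟨0, by omega⟩ ⟨1, by omega⟩
  cases p with
  | cons h _ => exact ⟨_, _, h⟩

end Chunk3

open EPAux Chunk2 Chunk3

/-- Proposition 3.2: for connected graphs `G₁, …, G_m` on the same vertex set `{1,…,d}`,
the Minkowski sum `P_{G₁} + ⋯ + P_{G_m}` has dimension `d - 2` if the union graph is
bipartite, and `d - 1` otherwise. -/
theorem dim_minkowski_sum_edgePolytopes {d m : ℕ} (hm : 0 < m)
    (G : Fin m → SimpleGraph (Fin d)) (hconn : ∀ i, (G i).Connected) :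
    ((⨆ i, G i).Colorable 2 →
      Module.finrank ℝ (affineSpan ℝ (∑ i, edgePolytope (G i))).direction = d - 2) ∧
    (¬ (⨆ i, G i).Colorable 2 →
      Module.finrank ℝ (affineSpan ℝ (∑ i, edgePolytope (G i))).direction = d - 1) := by
  classical
  by_cases hd2 : 2 ≤ d
  case neg =>
    have hss : ∀ a b : Fin d, a = b := fun a b => Fin.ext (by omega)
    have hcol : (⨆ i, G i).Colorable 2 := by
      refine ⟨SimpleGraph.Coloring.mk (fun _ => 0) ?_⟩
      intro a b hab
      exact absurd (hss a b) hab.ne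
    have hempty : ∀ i, edgePolytope (G i) = (∅ : Set (Fin d → ℝ)) := by
      intro i
      have hes : (G i).edgeSet = ∅ := by
        ext e
        simp only [Set.mem_empty_iff_false, iff_false]
        induction e using Sym2.ind with
        | _ x y =>
          intro he
          rw [SimpleGraph.mem_edgeSet] at he
          exact he.ne (hss x y)
      simp [edgePolytope, hes]
    have hsum : (∑ i, edgePolytope (G i)) = (∅ : Set (Fin d → ℝ)) := by
      ext x
      simp only [Set.mem_empty_iff_false, iff_false]
      intro hx
      obtain ⟨g, hg, -⟩ := (Set.mem_fintype_sum _ x).mp hx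
      have := hg ⟨0, hm⟩
      rw [hempty] at this
      exact this
    rw [hsum, AffineSubspace.span_empty, AffineSubspace.direction_bot]
    constructor
    · intro _
      rw [finrank_bot]
      omega
    · intro h
      exact absurd hcol h
  case pos =>
    set S : Fin m → Set (Fin d → ℝ) := fun i => edgeVec '' (G i).edgeSet with hS
    have hedge : ∀ i, ∃ a b, (G i).Adj a b := fun i => exists_adj (hconn i) hd2
    have hne : ∀ i, (S i).Nonempty := by
      intro i
      obtain ⟨a, b, hab⟩ := hedge i
      exact ⟨edgeVec s(a,b), Set.mem_image_of_mem _ ((SimpleGraph.mem_edgeSet _).mpr hab)⟩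
    have hdir : (affineSpan ℝ (∑ i, edgePolytope (G i))).direction
        = ⨆ i, vectorSpan ℝ (S i) := by
      have h1 : (∑ i, edgePolytope (G i)) = convexHull ℝ (∑ i, S i) := by
        rw [convexHull_sum]
        rfl
      rw [h1, affineSpan_convexHull, direction_affineSpan, vectorSpan_setSum S hne]
    rw [hdir]
    set T := ⨆ i, vectorSpan ℝ (S i) with hT
    have hgen : ∀ (i : Fin m) (K : Submodule ℝ (Fin d → ℝ)),
        (∀ e ∈ (G i).edgeSet, ∀ f ∈ (G i).edgeSet, edgeVec e - edgeVec f ∈ K) →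
        vectorSpan ℝ (S i) ≤ K := by
      intro i K hK
      rw [vectorSpan_def, Submodule.span_le]
      rintro z hz
      rw [Set.mem_vsub] at hz
      obtain ⟨av, ha, bv, hb, rfl⟩ := hz
      obtain ⟨e, he, rfl⟩ := ha
      obtain ⟨f, hf, rfl⟩ := hb
      exact hK e he f hf
    have hTle : T ≤ LinearMap.ker tot := by
      refine iSup_le fun i => hgen i _ ?_
      intro e he f hf
      rw [LinearMap.mem_ker, map_sub, tot_edgeVec he, tot_edgeVec hf, sub_self]
    have hd1 : 0 < d := by omega
    constructor
    · intro hcol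
      obtain ⟨Co⟩ := hcol
      set C : Fin d → Bool := fun v => decide (Co v = 0) with hC
      have hCprop : ∀ a b, (⨆ i, G i).Adj a b → C a ≠ C b := by
        intro a b hab hcc
        have h2 : Co a ≠ Co b := Co.valid hab
        have h3 : (Co a = 0) ↔ (Co b = 0) := by simpa [hC, decide_eq_decide] using hcc
        have h4 : ∀ p q : Fin 2, p ≠ q → ((p = 0) ↔ (q = 0)) → False := by decide
        exact h4 _ _ h2 h3
      have hCi : ∀ (i : Fin m) a b, (G i).Adj a b → C a ≠ C b :=
        fun i a b hab => hCprop a b (le_iSup G i hab)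
      obtain ⟨a₁, b₁, hab₁⟩ := hedge ⟨0, hm⟩
      have hcc := hCi _ _ _ hab₁
      obtain ⟨a₀, b₀, ha₀, hb₀⟩ : ∃ a₀ b₀, C a₀ = true ∧ C b₀ = false := by
        cases hA : C a₁ <;> cases hB : C b₁
        · exact absurd (hA.trans hB.symm) hcc
        · exact ⟨b₁, a₁, hB, hA⟩
        · exact ⟨a₁, b₁, hA, hB⟩
        · exact absurd (hA.trans hB.symm) hcc
      have hsame : ∀ u v : Fin d, C u = C v →
          (Pi.single u 1 : Fin d → ℝ) - Pi.single v 1 ∈ T := by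
        intro u v huv
        obtain ⟨w⟩ := (hconn ⟨0, hm⟩).preconnected u v
        exact le_iSup (fun i => vectorSpan ℝ (S i)) ⟨0, hm⟩
          (even_walk w ((walk_parity (hCi ⟨0, hm⟩) w).mpr huv))
      have hKT : LinearMap.ker (phi C) ≤ T := by
        intro x hx
        rw [LinearMap.mem_ker] at hx
        exact mem_of_colsum_zero hsame ha₀ hb₀ (congrArg Prod.fst hx) (congrArg Prod.snd hx)
      have hTK : T ≤ LinearMap.ker (phi C) := by
        refine iSup_le fun i => hgen i _ ?_
        intro e he f hf
        rw [LinearMap.mem_ker, map_sub]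
        have h1 := colSum_edgeVec (hCi i) he
        have h2 := colSum_edgeVec (hCi i) hf
        have hphi : phi C (edgeVec e) = phi C (edgeVec f) := by
          have he1 : phi C (edgeVec e) = (1, 1) := by
            simp [phi, LinearMap.prod_apply, h1]
          have hf1 : phi C (edgeVec f) = (1, 1) := by
            simp [phi, LinearMap.prod_apply, h2]
          rw [he1, hf1]
        rw [hphi, sub_self]
      rw [le_antisymm hTK hKT]
      exact finrank_ker_phi ha₀ hb₀
    · intro hcol
      by_cases hex : ∃ i, ¬ (G i).Colorable 2
      · obtain ⟨i, hi⟩ := hex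
        have hall : ∀ u v : Fin d, (Pi.single u 1 : Fin d → ℝ) - Pi.single v 1 ∈ T := by
          intro u v
          obtain ⟨p, hp⟩ := exists_even_walk (hconn i) hi u v
          exact le_iSup (fun i => vectorSpan ℝ (S i)) i (even_walk p hp)
        have hKT : LinearMap.ker tot ≤ T := by
          intro x hx
          rw [LinearMap.mem_ker] at hx
          exact mem_of_sum_zero hall ⟨0, hd1⟩ hx
        rw [le_antisymm hTle hKT]
        exact finrank_ker_tot hd1
      · push_neg at hex
        have hCs : ∀ i, ∃ C : Fin d → Bool, ∀ a b, (G i).Adj a b → C a ≠ C b := by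
          intro i
          obtain ⟨Co⟩ := hex i
          refine ⟨fun v => decide (Co v = 0), ?_⟩
          intro a b hab hcc
          have h2 : Co a ≠ Co b := Co.valid hab
          have h3 : (Co a = 0) ↔ (Co b = 0) := by simpa [decide_eq_decide] using hcc
          have h4 : ∀ p q : Fin 2, p ≠ q → ((p = 0) ↔ (q = 0)) → False := by decide
          exact h4 _ _ h2 h3
        choose C hC using hCs
        set i₀ : Fin m := ⟨0, hm⟩ with hi₀
        by_cases hagree : ∀ (j : Fin m) (a b : Fin d), (C i₀ a = C i₀ b ↔ C j a = C j b)
        · exfalso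
          apply hcol
          refine ⟨SimpleGraph.Coloring.mk (fun v => if C i₀ v then (0 : Fin 2) else 1) ?_⟩
          intro a b hab hcc
          rw [SimpleGraph.iSup_adj] at hab
          obtain ⟨j, hj⟩ := hab
          have hj2 : C j a ≠ C j b := hC j a b hj
          have h5 : C i₀ a ≠ C i₀ b := fun he => hj2 ((hagree j a b).mp he)
          cases hA : C i₀ a <;> cases hB : C i₀ b <;> simp_all
        · push_neg at hagree
          obtain ⟨j, a, b, hiff⟩ := hagree
          have key : ∀ (p q : Fin m) (a b : Fin d), C p a = C p b → C q a ≠ C q b →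
              Module.finrank ℝ T = d - 1 := by
            intro p q a b hp hq
            have hxT : (Pi.single a 1 : Fin d → ℝ) - Pi.single b 1 ∈ T := by
              obtain ⟨w⟩ := (hconn p).preconnected a b
              exact le_iSup (fun i => vectorSpan ℝ (S i)) p
                (even_walk w ((walk_parity (hC p) w).mpr hp))
            obtain ⟨aq, bq, habq⟩ := hedge q
            have hccq := hC q _ _ habq
            obtain ⟨a₀, b₀, ha₀, hb₀⟩ : ∃ a₀ b₀, C q a₀ = true ∧ C q b₀ = false := by
              cases hA : C q aq <;> cases hB : C q bq
              · exact absurd (hA.trans hB.symm) hccq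
              · exact ⟨bq, aq, hB, hA⟩
              · exact ⟨aq, bq, hA, hB⟩
              · exact absurd (hA.trans hB.symm) hccq
            have hsame : ∀ u v : Fin d, C q u = C q v →
                (Pi.single u 1 : Fin d → ℝ) - Pi.single v 1 ∈ T := by
              intro u v huv
              obtain ⟨w⟩ := (hconn q).preconnected u v
              exact le_iSup (fun i => vectorSpan ℝ (S i)) q
                (even_walk w ((walk_parity (hC q) w).mpr huv))
            have hKT : LinearMap.ker (phi (C q)) ≤ T := by
              intro x hx
              rw [LinearMap.mem_ker] at hx
              exact mem_of_colsum_zero hsame ha₀ hb₀ (congrArg Prod.fst hx)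
                (congrArg Prod.snd hx)
            have hxK : (Pi.single a 1 : Fin d → ℝ) - Pi.single b 1 ∉
                LinearMap.ker (phi (C q)) := by
              rw [LinearMap.mem_ker]
              intro hzero
              have h1 : colSum (C q) true ((Pi.single a 1 : Fin d → ℝ) - Pi.single b 1) = 0 :=
                congrArg Prod.fst hzero
              rw [map_sub, colSum_single, colSum_single] at h1
              cases hA : C q a <;> cases hB : C q b <;> simp_all
            have hlt : LinearMap.ker (phi (C q)) < T :=
              lt_of_le_of_ne hKT (fun he => hxK (he ▸ hxT))
            have h2 := Submodule.finrank_lt_finrank_of_lt hlt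
            rw [finrank_ker_phi ha₀ hb₀] at h2
            have h3 : Module.finrank ℝ T ≤ d - 1 := by
              have h4 := Submodule.finrank_mono hTle
              rwa [finrank_ker_tot hd1] at h4
            omega
          rcases hiff with ⟨h1, h2⟩ | ⟨h1, h2⟩
          · exact key i₀ j a b h1 h2
          · exact key j i₀ a b h2 h1
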